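/- Let σ(x) = 1/(1+exp(−x)) be the logistic function and for real numbers a, b set p_a = σ(a), p_b = σ(b). Then the second Kullback–Leibler moment of Bernoulli(p_a) against Bernoulli(p_b) satisfies: p_a·(log(p_a/p_b))² + (1−p_a)·(log((1−p_a)/(1−p_b)))² ≤ [ p_a/(min(p_a,p_b))² + (1−p_a)/(1−max(p_a,p_b))² ] · (max(p_a,p_b))² · (a − b)². -/

import Mathlib

/-- The logistic (sigmoid) function `σ(x) = 1/(1+exp(−x))`. -/
noncomputable def logistic (x : ℝ) : ℝ := 1 / (1 + Real.exp (-x))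

lemma one_add_exp_pos (x : ℝ) : 0 < 1 + Real.exp (-x) := by positivity

lemma logistic_pos (x : ℝ) : 0 < logistic x := by
  unfold logistic; positivity

lemma logistic_lt_one (x : ℝ) : logistic x < 1 := by
  unfold logistic
  rw [div_lt_one (one_add_exp_pos x)]
  linarith [Real.exp_pos (-x)]

lemma logistic_mono : Monotone logistic := by
  intro x y h
  unfold logistic
  apply div_le_div_of_nonneg_left (by norm_num) (one_add_exp_pos y)
  have := Real.exp_le_exp.2 (neg_le_neg h)
  linarith

lemma log_logistic (x : ℝ) : Real.log (logistic x) = -Real.log (1 + Real.exp (-x)) := by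
  unfold logistic
  rw [Real.log_div one_ne_zero (ne_of_gt (one_add_exp_pos x)), Real.log_one]
  ring

lemma one_sub_logistic (x : ℝ) : 1 - logistic x = Real.exp (-x) / (1 + Real.exp (-x)) := by
  unfold logistic
  field_simp
  ring

lemma one_sub_logistic_pos (x : ℝ) : 0 < 1 - logistic x := by
  linarith [logistic_lt_one x]

lemma log_one_sub_logistic (x : ℝ) :
    Real.log (1 - logistic x) = -x - Real.log (1 + Real.exp (-x)) := by
  rw [one_sub_logistic,
    Real.log_div (Real.exp_ne_zero _) (ne_of_gt (one_add_exp_pos x)), Real.log_exp]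

lemma hasDerivAt_log_logistic (x : ℝ) :
    HasDerivAt (fun t => Real.log (logistic t)) (1 - logistic x) x := by
  have h1 : HasDerivAt (fun t : ℝ => 1 + Real.exp (-t)) (-Real.exp (-x)) x := by
    simpa using (((Real.hasDerivAt_exp (-x)).comp x (hasDerivAt_neg x)).const_add 1)
  have h2 : HasDerivAt (fun t => Real.log (1 + Real.exp (-t)))
      (-Real.exp (-x) / (1 + Real.exp (-x))) x :=
    h1.log (ne_of_gt (one_add_exp_pos x))
  have h4 : HasDerivAt (fun t => -Real.log (1 + Real.exp (-t))) (1 - logistic x) x := by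
    refine h2.neg.congr_deriv ?_
    rw [one_sub_logistic]; ring
  simpa only [← log_logistic] using h4

lemma hasDerivAt_log_one_sub_logistic (x : ℝ) :
    HasDerivAt (fun t => Real.log (1 - logistic t)) (-logistic x) x := by
  have h1 : HasDerivAt (fun t : ℝ => 1 + Real.exp (-t)) (-Real.exp (-x)) x := by
    simpa using (((Real.hasDerivAt_exp (-x)).comp x (hasDerivAt_neg x)).const_add 1)
  have h2 : HasDerivAt (fun t => Real.log (1 + Real.exp (-t)))
      (-Real.exp (-x) / (1 + Real.exp (-x))) x :=
    h1.log (ne_of_gt (one_add_exp_pos x))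
  have h4 : HasDerivAt (fun t : ℝ => -t - Real.log (1 + Real.exp (-t))) (-logistic x) x := by
    refine ((hasDerivAt_neg x).sub h2).congr_deriv ?_
    unfold logistic
    field_simp
    ring
  simpa only [← log_one_sub_logistic] using h4

/-- Upper bound on the second KL moment between Bernoulli(σ(a)) and Bernoulli(σ(b)). -/
theorem second_kl_moment_bernoulli_logistic_le (a b : ℝ) :
    logistic a * (Real.log (logistic a / logistic b)) ^ 2
      + (1 - logistic a) * (Real.log ((1 - logistic a) / (1 - logistic b))) ^ 2
    ≤ (logistic a / (min (logistic a) (logistic b)) ^ 2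
        + (1 - logistic a) / (1 - max (logistic a) (logistic b)) ^ 2)
      * (max (logistic a) (logistic b)) ^ 2 * (a - b) ^ 2 := by
  set p := logistic a with hp
  set q := logistic b with hq
  have hp0 := logistic_pos a
  have hq0 := logistic_pos b
  have hp1 := logistic_lt_one a
  have hq1 := logistic_lt_one b
  set m := min p q
  set M := max p q
  have hm0 : 0 < m := lt_min hp0 hq0
  have hM1 : M < 1 := max_lt hp1 hq1
  have hmM : m ≤ M := min_le_max
  -- Lipschitz bound 1: |log p - log q| ≤ |a - b|
  have hL1 : |Real.log p - Real.log q| ≤ |a - b| := by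
    have := convex_univ.norm_image_sub_le_of_norm_hasDerivWithin_le
      (C := 1) (f := fun t => Real.log (logistic t)) (f' := fun t => 1 - logistic t)
      (fun x _ => (hasDerivAt_log_logistic x).hasDerivWithinAt)
      (fun x _ => by
        rw [Real.norm_eq_abs, abs_of_nonneg (le_of_lt (one_sub_logistic_pos x))]
        linarith [logistic_pos x])
      (Set.mem_univ b) (Set.mem_univ a)
    simpa [Real.norm_eq_abs] using this
  -- Lipschitz bound 2: |log (1-p) - log (1-q)| ≤ M * |a - b|
  have hL2 : |Real.log (1 - p) - Real.log (1 - q)| ≤ M * |a - b| := by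
    have hML : ∀ x ∈ Set.Icc (min a b) (max a b), logistic x ≤ M := by
      intro x hx
      have := logistic_mono hx.2
      calc logistic x ≤ logistic (max a b) := logistic_mono hx.2
        _ = M := by
          rcases le_total a b with h | h
          · rw [max_eq_right h]; exact (max_eq_right (logistic_mono h)).symm
          · rw [max_eq_left h]; exact (max_eq_left (logistic_mono h)).symm
    have := (convex_Icc (min a b) (max a b)).norm_image_sub_le_of_norm_hasDerivWithin_le
      (C := M) (f := fun t => Real.log (1 - logistic t)) (f' := fun t => -logistic t)
      (fun x _ => (hasDerivAt_log_one_sub_logistic x).hasDerivWithinAt)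
      (fun x hx => by
        rw [Real.norm_eq_abs, abs_neg, abs_of_pos (logistic_pos x)]
        exact hML x hx)
      (Set.mem_Icc.2 ⟨min_le_right a b, le_max_right a b⟩)
      (Set.mem_Icc.2 ⟨min_le_left a b, le_max_left a b⟩)
    simpa [Real.norm_eq_abs] using this
  rw [Real.log_div (ne_of_gt hp0) (ne_of_gt hq0),
    Real.log_div (ne_of_gt (one_sub_logistic_pos a)) (ne_of_gt (one_sub_logistic_pos b))]
  have hM0 : 0 < M := lt_of_lt_of_le hm0 hmM
  have h1sq : (Real.log p - Real.log q) ^ 2 ≤ (a - b) ^ 2 := by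
    have := pow_le_pow_left₀ (abs_nonneg _) hL1 2
    rwa [sq_abs, sq_abs] at this
  have h2sq : (Real.log (1 - p) - Real.log (1 - q)) ^ 2 ≤ M ^ 2 * (a - b) ^ 2 := by
    have := pow_le_pow_left₀ (abs_nonneg _) hL2 2
    rwa [sq_abs, mul_pow, sq_abs] at this
  have hpm : p ≤ p / m ^ 2 * M ^ 2 := by
    rw [div_mul_eq_mul_div, le_div_iff₀ (by positivity)]
    exact mul_le_mul_of_nonneg_left (pow_le_pow_left₀ hm0.le hmM 2) hp0.le
  have h1M : (1 - p) ≤ (1 - p) / (1 - M) ^ 2 := by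
    have h1p : 0 < 1 - p := by rw [hp]; exact one_sub_logistic_pos a
    rw [le_div_iff₀ (pow_pos (by linarith : (0:ℝ) < 1 - M) 2)]
    nlinarith [mul_nonneg h1p.le (mul_nonneg hM0.le (by linarith : (0:ℝ) ≤ 2 - M))]
  have key1 : p * (Real.log p - Real.log q) ^ 2 ≤ p / m ^ 2 * M ^ 2 * (a - b) ^ 2 := by
    calc p * (Real.log p - Real.log q) ^ 2 ≤ p * (a - b) ^ 2 :=
          mul_le_mul_of_nonneg_left h1sq (le_of_lt hp0)
      _ ≤ p / m ^ 2 * M ^ 2 * (a - b) ^ 2 :=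
          mul_le_mul_of_nonneg_right hpm (sq_nonneg _)
  have key2 : (1 - p) * (Real.log (1 - p) - Real.log (1 - q)) ^ 2
      ≤ (1 - p) / (1 - M) ^ 2 * M ^ 2 * (a - b) ^ 2 := by
    calc (1 - p) * (Real.log (1 - p) - Real.log (1 - q)) ^ 2
        ≤ (1 - p) * (M ^ 2 * (a - b) ^ 2) :=
          mul_le_mul_of_nonneg_left h2sq (le_of_lt (one_sub_logistic_pos a))
      _ ≤ (1 - p) / (1 - M) ^ 2 * M ^ 2 * (a - b) ^ 2 := by
          rw [mul_assoc]
          exact mul_le_mul_of_nonneg_right h1M (by positivity)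
  calc p * (Real.log p - Real.log q) ^ 2 + (1 - p) * (Real.log (1 - p) - Real.log (1 - q)) ^ 2
      ≤ p / m ^ 2 * M ^ 2 * (a - b) ^ 2 + (1 - p) / (1 - M) ^ 2 * M ^ 2 * (a - b) ^ 2 :=
        add_le_add key1 key2
    _ = (p / m ^ 2 + (1 - p) / (1 - M) ^ 2) * M ^ 2 * (a - b) ^ 2 := by ring
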